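/- arXiv:1910.02648 — 3 statements merged into one kernel-verified Lean document; each statement's English description precedes it below -/
import Mathlib

section
/- Let K be a field of characteristic p > 3 and a, b ∈ K such that the quartic P(x) = x⁴ + a·x² + b·x - a²/12 has a root α in an extension of K with α ∉ K. If K carries a derivation with a' and b' the derivatives of a and b, then α satisfies a Riccati equation α' = q₂·α² + q₁·α + q₀ with q₀, q₁, q₂ ∈ K; i.e., under the condition c = -a²/12 on the quartic x⁴ + ax² + bx + c, its roots are differential-quadratic. -/
/-- Under the condition c = -a²/12, a root of the quartic x⁴ + ax² + bx + c
is differential-quadratic. -/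
theorem stmt_6 (K L : Type*) [Field K] [Field L] [Algebra K L]
    (p : ℕ) [Fact p.Prime] (hp : 3 < p) [CharP L p]
    (D : Derivation ℤ L L)
    (hD : ∀ k : K, ∃ k' : K, D (algebraMap K L k) = algebraMap K L k')
    (a b : K) (α : L) (hα : α ∉ Set.range (algebraMap K L))
    (hroot : α ^ 4 + algebraMap K L a * α ^ 2 + algebraMap K L b * α
        - algebraMap K L (a ^ 2 / 12) = 0) :
    ∃ q₀ q₁ q₂ : K,
      D α = algebraMap K L q₂ * α ^ 2 + algebraMap K L q₁ * α + algebraMap K L q₀ := by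
  set f := algebraMap K L with hf
  have hinj : Function.Injective f := f.injective
  -- characteristic facts
  have hq : p.Prime := Fact.out
  have hpd : ¬ (p ∣ 12) := by
    intro h
    have h12 : p ≤ 12 := Nat.le_of_dvd (by norm_num) h
    interval_cases p <;> revert h hq <;> decide
  have h12L : (12 : L) ≠ 0 := by
    intro h
    exact hpd ((CharP.cast_eq_zero_iff L p 12).mp (by exact_mod_cast h))
  have h2L : (2 : L) ≠ 0 := fun h => h12L (by linear_combination (6:L) * h)
  have h6L : (6 : L) ≠ 0 := fun h => h12L (by linear_combination (2:L) * h)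
  have h12K : (12 : K) ≠ 0 := by
    intro h
    apply h12L
    have h' : f 12 = (12 : L) := map_ofNat f 12
    rw [← h', h, map_zero]
  have h2K : (2:K) ≠ 0 := fun h => h12K (by linear_combination 6*h)
  have h3K : (3:K) ≠ 0 := fun h => h12K (by linear_combination 4*h)
  have hD12 : D (12 : L) = 0 := by
    have h1 : algebraMap ℤ L (12 : ℤ) = (12 : L) := by simp [algebraMap_int_eq]
    rw [← h1, Derivation.map_algebraMap]
  -- derivatives of a, b
  obtain ⟨a1, ha1⟩ := hD a
  obtain ⟨b1, hb1⟩ := hD b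
  -- the constant term
  have h12c2 : (12 : L) * f (a^2/12) = (f a)^2 := by
    have h' : (12:L) = f 12 := (map_ofNat f 12).symm
    rw [h', ← map_mul, ← map_pow]
    congr 1
    field_simp
  -- differentiated root equation
  have hE : (4*α^3 + 2*f a*α + f b) * D α + f a1 * α^2 + f b1 * α
      - D (f (a^2/12)) = 0 := by
    have h := congrArg D hroot
    simp only [map_add, map_sub, map_zero, Derivation.leibniz, Derivation.leibniz_pow,
      smul_eq_mul, nsmul_eq_mul, Nat.cast_ofNat, ha1, hb1] at h
    linear_combination h
  have hDc2 : (6:L) * D (f (a^2/12)) = f a * f a1 := by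
    have h := congrArg D h12c2
    simp only [Derivation.leibniz, Derivation.leibniz_pow, smul_eq_mul, nsmul_eq_mul,
      Nat.cast_ofNat, hD12, ha1] at h
    apply mul_left_cancel₀ h2L
    linear_combination h
  by_cases hδ : 8*a^3 + 27*b^2 = 0
  · -- degenerate discriminant: the quartic has a double root in K
    by_cases ha : a = 0
    · -- then b = 0 and α = 0 ∈ K, contradiction
      exfalso
      have hb : b = 0 := by
        have h27 : (27:K) * b^2 = 0 := by rw [ha] at hδ; linear_combination hδ
        have hbsq : b^2 = 0 := by
          have h27ne : (27:K) ≠ 0 := by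
            intro h; exact h3K (by
              have h3 : (3:K)^3 = 0 := by rw [show ((3:K))^3 = 27 by norm_num, h]
              exact pow_eq_zero_iff (by norm_num) |>.mp h3)
          exact (mul_eq_zero.mp h27).resolve_left h27ne
        exact pow_eq_zero_iff (by norm_num) |>.mp hbsq
      have hα4 : α ^ 4 = 0 := by
        rw [ha, hb] at hroot
        simpa using hroot
      have hz : α = 0 := pow_eq_zero_iff (by norm_num) |>.mp hα4
      exact hα ⟨0, by rw [map_zero, hz]⟩
    · -- a ≠ 0 : α satisfies a quadratic over K
      obtain ⟨r, hr⟩ : ∃ r : K, r = -(3*b)/(4*a) := ⟨_, rfl⟩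
      obtain ⟨v, hv⟩ : ∃ v : K, v = a + 3*r^2 := ⟨_, rfl⟩
      have h4a : (4:K)*a ≠ 0 := by
        intro h
        rcases mul_eq_zero.mp h with h4 | h'
        · exact h12K (by linear_combination 3*h4)
        · exact ha h'
      have h4K : (4:K) ≠ 0 := fun h => h12K (by linear_combination 3*h)
      have hKb : -(4*r^3) - 2*a*r = b := by
        rw [hr]
        field_simp
        ring_nf
        linear_combination b * hδ
      have hKc : r^2*v = -(a^2/12) := by
        rw [hv, hr]
        field_simp
        ring_nf
        linear_combination (32*a^3 + 108*b^2) * hδ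
      -- map the identities to L
      have hvL : f v = f a + 3*(f r)^2 := by
        rw [hv]; push_cast [map_add, map_mul, map_pow, map_ofNat]; ring
      have hbL : f b = -(4*(f r)^3) - 2*(f a)*(f r) := by
        have h := congrArg f hKb
        push_cast [map_sub, map_neg, map_mul, map_pow, map_ofNat] at h
        linear_combination -h
      have hcL : (f r)^2 * f v + f (a^2/12) = 0 := by
        have h := congrArg f hKc
        push_cast [map_neg, map_mul, map_pow] at h
        linear_combination h
      have hU : f (2*r) = 2 * f r := by
        push_cast [map_mul, map_ofNat]; ring
      have hfact : (α - f r)^2 * (α^2 + f (2*r)*α + f v) = 0 := by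
        rw [hU]
        linear_combination hroot + (α^2 - 2*(f r)*α)*hvL - α*hbL + hcL
      rcases mul_eq_zero.mp hfact with h | hquad
      · exfalso
        have hz : α - f r = 0 := pow_eq_zero_iff (n := 2) (by norm_num) |>.mp h
        exact hα ⟨r, (sub_eq_zero.mp hz).symm⟩
      · obtain ⟨u1, hu1⟩ := hD (2*r)
        obtain ⟨v1, hv1⟩ := hD v
        have hQE : (2*α + f (2*r)) * D α + f u1 * α + f v1 = 0 := by
          have h := congrArg D hquad
          simp only [map_add, map_zero, Derivation.leibniz, Derivation.leibniz_pow,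
            smul_eq_mul, nsmul_eq_mul, Nat.cast_ofNat, hu1, hv1] at h
          linear_combination h
        have hW2 : (2*α + f (2*r))^2 = f ((2*r)^2 - 4*v) := by
          have hm : f ((2*r)^2 - 4*v) = (f (2*r))^2 - 4*(f v) := by
            push_cast [map_sub, map_mul, map_pow, map_ofNat]; ring
          rw [hm]
          linear_combination 4*hquad
        have hWne : 2*α + f (2*r) ≠ 0 := by
          intro h
          apply hα
          refine ⟨-r, ?_⟩
          have h2 : (2:L) * f (-r) = (2:L) * α := by
            rw [map_neg]; rw [hU] at h; linear_combination -h
          exact mul_left_cancel₀ h2L h2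
        have hΔKne : f ((2*r)^2 - 4*v) ≠ 0 := by
          intro h
          rw [h] at hW2
          exact hWne (pow_eq_zero_iff (n := 2) (by norm_num) |>.mp hW2)
        have key : f ((2*r)^2 - 4*v) * D α
            = -(2*(f u1))*α^2 + (-(2*(f v1)) - f (2*r) * f u1)*α - f (2*r) * f v1 := by
          linear_combination (D α) * hW2.symm + (2*α + f (2*r)) * hQE
        refine ⟨(-((2*r)*v1))/((2*r)^2-4*v), ((-(2*v1)) - (2*r)*u1)/((2*r)^2-4*v),
          (-(2*u1))/((2*r)^2-4*v), ?_⟩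
        have e0 : f (-((2*r)*v1)) = -(f (2*r) * f v1) := by
          rw [map_neg, map_mul]
        have e1 : f ((-(2*v1)) - (2*r)*u1) = -(2*(f v1)) - f (2*r) * f u1 := by
          rw [map_sub, map_neg, map_mul, map_mul, map_ofNat]
        have e2 : f (-(2*u1)) = -(2*(f u1)) := by
          rw [map_neg, map_mul, map_ofNat]
        rw [map_div₀, map_div₀, map_div₀, e0, e1, e2]
        simp only [hU] at key ⊢
        generalize hG : f ((2*r)^2 - 4*v) = G at hΔKne key ⊢
        field_simp
        linear_combination key
  · -- nondegenerate case: Riccati equation from the resolvent identity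
    set A := f a with hA
    set B := f b with hB
    set A1 := f a1 with hA1
    set B1 := f b1 with hB1
    have hΔmap : f (8*a^3 + 27*b^2) = 8*A^3 + 27*B^2 := by
      simp [hA, hB, map_add, map_mul, map_pow, map_ofNat]
    have hΔne : (8*A^3 + 27*B^2 : L) ≠ 0 := by
      rw [← hΔmap]
      simpa using fun h => hδ (hinj (by simpa using h))
    set Δ : L := 8*A^3 + 27*B^2 with hΔ
    -- P'(α) ≠ 0 via the Bezout identity
    have hbez : (36*α^3 + 42*A*α + 27*B) * (4*α^3 + 2*A*α + B) = Δ := by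
      linear_combination (144*α^2 + 96*A) * hroot + (12*α^2 + 8*A) * h12c2
    have hP'ne : (4*α^3 + 2*A*α + B) ≠ 0 := by
      intro h
      rw [h, mul_zero] at hbez
      exact hΔne hbez.symm
    -- main polynomial identity
    set Q0 : L := 27*A*B*A1 - 18*A^2*B1 with hQ0
    set Q1 : L := 24*A^2*A1 + 54*B*B1 with hQ1
    set Q2 : L := 54*B*A1 - 36*A*B1 with hQ2
    have hmain12 : (12:L) * ((Q2*α^2 + Q1*α + Q0) * (4*α^3 + 2*A*α + B)
        + 6*Δ*A1*α^2 + 6*Δ*B1*α - Δ*A*A1) = 0 := by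
      linear_combination (12*((216*B*A1 - 144*A*B1)*α + (96*A^2*A1 + 216*B*B1))) * hroot
        + ((216*B*A1 - 144*A*B1)*α + (96*A^2*A1 + 216*B*B1)) * h12c2
    have hmain : (Q2*α^2 + Q1*α + Q0) * (4*α^3 + 2*A*α + B)
        + 6*Δ*A1*α^2 + 6*Δ*B1*α - Δ*A*A1 = 0 :=
      (mul_eq_zero.mp hmain12).resolve_left h12L
    have hcomb : (4*α^3 + 2*A*α + B) * (6*Δ*D α - (Q2*α^2 + Q1*α + Q0)) = 0 := by
      linear_combination (6*Δ) * hE - hmain + Δ * hDc2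
    have hfin : 6*Δ*D α = Q2*α^2 + Q1*α + Q0 :=
      sub_eq_zero.mp ((mul_eq_zero.mp hcomb).resolve_left hP'ne)
    refine ⟨(27*a*b*a1 - 18*a^2*b1)/(6*(8*a^3+27*b^2)),
        (24*a^2*a1 + 54*b*b1)/(6*(8*a^3+27*b^2)),
        (54*b*a1 - 36*a*b1)/(6*(8*a^3+27*b^2)), ?_⟩
    have h6Δ : (6:L)*Δ ≠ 0 := mul_ne_zero h6L hΔne
    have h6Δmap : f (6*(8*a^3+27*b^2)) = 6*Δ := by
      rw [map_mul, hΔmap, map_ofNat]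
    apply mul_left_cancel₀ h6Δ
    rw [hfin]
    rw [show f ((27*a*b*a1 - 18*a^2*b1)/(6*(8*a^3+27*b^2)))
        = f (27*a*b*a1 - 18*a^2*b1) / f (6*(8*a^3+27*b^2)) from map_div₀ f _ _,
      show f ((24*a^2*a1 + 54*b*b1)/(6*(8*a^3+27*b^2)))
        = f (24*a^2*a1 + 54*b*b1) / f (6*(8*a^3+27*b^2)) from map_div₀ f _ _,
      show f ((54*b*a1 - 36*a*b1)/(6*(8*a^3+27*b^2)))
        = f (54*b*a1 - 36*a*b1) / f (6*(8*a^3+27*b^2)) from map_div₀ f _ _,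
      h6Δmap]
    have e0 : f (27*a*b*a1 - 18*a^2*b1) = Q0 := by
      simp [hQ0, hA, hB, hA1, hB1, map_sub, map_mul, map_pow, map_ofNat]
    have e1 : f (24*a^2*a1 + 54*b*b1) = Q1 := by
      simp [hQ1, hA, hB, hA1, hB1, map_add, map_mul, map_pow, map_ofNat]
    have e2 : f (54*b*a1 - 36*a*b1) = Q2 := by
      simp [hQ2, hA, hB, hA1, hB1, map_sub, map_mul, map_pow, map_ofNat]
    rw [e0, e1, e2]
    field_simp
end

section
/- Let K = F_q(T) with p > 5 and let a, b, c ∈ K satisfy conditions (C₁): 18a³ + 325bc = 0 and (C₂): 5b'c = 4c'b, where ' denotes d/dT. If α is a root of P(x) = x⁵ + a·x² + b·x + c in an extension of K (with the discriminant of P nonzero), then α satisfies a Riccati equation: writing α' = b₄α⁴ + b₃α³ + b₂α² + b₁α + b₀ with bᵢ ∈ K (obtained by implicit differentiation), one has b₄ = b₃ = 0 (indeed also b₂ = b₀ = 0), so α' = b₁·α. -/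
open Polynomial

/-- Algebraic core: conditions (C₁), (C₂) and the derivative of (C₁) give a common
logarithmic-derivative-like factor b₁. -/
lemma key_lemma {K : Type*} [Field K] (h2 : (2:K) ≠ 0) (h3 : (3:K) ≠ 0) (h5 : (5:K) ≠ 0)
    (a b c a' b' c' : K)
    (hC1 : 18 * a ^ 3 + 325 * b * c = 0) (hC2 : 5 * b' * c = 4 * c' * b)
    (h54 : 54 * a ^ 2 * a' + 325 * (b' * c + b * c') = 0)
    (hb0 : b = 0 → b' = 0) (hc0 : c = 0 → c' = 0) (ha0 : a = 0 → a' = 0)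
    (hne : ¬ (b = 0 ∧ c = 0)) :
    ∃ b₁ : K, a' = 3 * a * b₁ ∧ b' = 4 * b * b₁ ∧ c' = 5 * c * b₁ := by
  have h18 : (18:K) ≠ 0 := by
    have := mul_ne_zero (mul_ne_zero h2 h3) h3
    norm_num at this ⊢
    exact_mod_cast this
  have h4 : (4:K) ≠ 0 := by
    have := mul_ne_zero h2 h2; norm_num at this ⊢; exact_mod_cast this
  by_cases hc : c = 0
  · have hb : b ≠ 0 := fun hb => hne ⟨hb, hc⟩
    have ha : a = 0 := by
      have h1 : 18 * a ^ 3 = 0 := by linear_combination hC1 - 325 * b * hc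
      have := (mul_eq_zero.mp h1).resolve_left h18
      exact pow_eq_zero_iff (by norm_num) |>.mp this
    refine ⟨b' / (4 * b), ?_, ?_, ?_⟩
    · rw [ha0 ha, ha]; ring
    · field_simp
    · rw [hc0 hc, hc]; ring
  · refine ⟨c' / (5 * c), ?_, ?_, ?_⟩
    · by_cases ha : a = 0
      · rw [ha0 ha, ha]; ring
      · have key : (54 * a ^ 2) * (5 * c * a' - 3 * a * c') = 0 := by
          linear_combination (5*c) * h54 - (325*c) * hC2 - (9*c') * hC1
        have h54a : (54:K) * a ^ 2 ≠ 0 := by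
          apply mul_ne_zero _ (pow_ne_zero _ ha)
          have := mul_ne_zero (mul_ne_zero h2 h3) (mul_ne_zero h3 h3)
          norm_num at this ⊢
          exact_mod_cast this
        have hz : 5 * c * a' - 3 * a * c' = 0 := (mul_eq_zero.mp key).resolve_left h54a
        field_simp
        linear_combination hz
    · field_simp
      linear_combination hC2
    · field_simp

/-- Under conditions (C₁): 18a³ + 325bc = 0 and (C₂): 5b'c = 4c'b, a root of the
separable quintic x⁵ + ax² + bx + c satisfies the Riccati equation α' = b₁·α. -/
theorem stmt_7 (K L : Type*) [Field K] [Field L] [Algebra K L]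
    (p : ℕ) [Fact p.Prime] (hp : 5 < p) [CharP L p]
    (D : Derivation ℤ L L) (a b c a' b' c' : K)
    (hDa : D (algebraMap K L a) = algebraMap K L a')
    (hDb : D (algebraMap K L b) = algebraMap K L b')
    (hDc : D (algebraMap K L c) = algebraMap K L c')
    (hD : ∀ k : K, ∃ k' : K, D (algebraMap K L k) = algebraMap K L k')
    (hC1 : 18 * a ^ 3 + 325 * b * c = 0) (hC2 : 5 * b' * c = 4 * c' * b)
    (hsep : (X ^ 5 + C a * X ^ 2 + C b * X + C c : K[X]).Separable)
    (α : L)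
    (hroot : α ^ 5 + algebraMap K L a * α ^ 2 + algebraMap K L b * α
        + algebraMap K L c = 0) :
    ∃ b₁ : K, D α = algebraMap K L b₁ * α := by
  set φ := algebraMap K L with hφ
  have hinj : Function.Injective φ := φ.injective
  haveI : CharP K p := RingHom.charP φ hinj p
  have hn : ∀ n : ℕ, 0 < n → n < p → (n : K) ≠ 0 := fun n h1 h2 h =>
    Nat.not_dvd_of_pos_of_lt h1 h2 ((CharP.cast_eq_zero_iff K p n).mp h)
  have h2K : (2:K) ≠ 0 := by have := hn 2 (by norm_num) (by omega); exact_mod_cast this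
  have h3K : (3:K) ≠ 0 := by have := hn 3 (by norm_num) (by omega); exact_mod_cast this
  have h5K : (5:K) ≠ 0 := by have := hn 5 (by norm_num) (by omega); exact_mod_cast this
  by_cases hα : α = 0
  · exact ⟨0, by simp [hα]⟩
  -- vanishing of derivatives of vanishing coefficients
  have hz : ∀ x x' : K, D (φ x) = φ x' → x = 0 → x' = 0 := by
    intro x x' hx h0
    apply hinj
    rw [← hx, h0]
    simp
  -- derivative of condition C1
  have hC1L : (18:L) * φ a ^ 3 + 325 * φ b * φ c = 0 := by
    have h1 : φ (18 * a ^ 3 + 325 * b * c) = 0 := by rw [hC1, map_zero]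
    simpa [map_add, map_mul, map_pow, map_ofNat] using h1
  have h54L : φ (54 * a ^ 2 * a' + 325 * (b' * c + b * c')) = 0 := by
    have h1 : D ((18:L) * φ a ^ 3 + 325 * φ b * φ c) = 0 := by rw [hC1L, map_zero]
    rw [show ((18:L)) = ((18:ℕ):L) by norm_cast, show ((325:L)) = ((325:ℕ):L) by norm_cast] at h1
    simp only [map_add, Derivation.leibniz, Derivation.leibniz_pow, Derivation.map_natCast,
      hDa, hDb, hDc, smul_eq_mul, nsmul_eq_mul] at h1
    simp only [map_add, map_mul, map_pow, map_ofNat]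
    push_cast at h1 ⊢
    linear_combination h1
  have h54 : 54 * a ^ 2 * a' + 325 * (b' * c + b * c') = 0 := by
    apply hinj; rw [h54L, map_zero]
  -- not both b and c are zero (else α = 0)
  have hne : ¬ (b = 0 ∧ c = 0) := by
    rintro ⟨hb, hc⟩
    have ha : a = 0 := by
      have h1 : 18 * a ^ 3 = 0 := by linear_combination hC1 - 325 * b * hc
      have h18 : (18:K) ≠ 0 := by
        have h := mul_ne_zero h2K (pow_ne_zero 2 h3K)
        intro h0; apply h; rw [show (2:K)*3^2 = 18 by norm_num, h0]
      exact pow_eq_zero_iff (by norm_num) |>.mp ((mul_eq_zero.mp h1).resolve_left h18)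
    rw [ha, hb, hc] at hroot
    simp only [map_zero, zero_mul, mul_zero, add_zero, zero_add] at hroot
    exact hα (pow_eq_zero_iff (show (5:ℕ) ≠ 0 by norm_num) |>.mp hroot)
  obtain ⟨b₁, ha', hb', hc'⟩ := key_lemma h2K h3K h5K a b c a' b' c' hC1 hC2 h54
    (hz b b' hDb) (hz c c' hDc) (hz a a' hDa) hne
  refine ⟨b₁, ?_⟩
  -- the derivative of P at α is nonzero
  obtain ⟨u, v, huv⟩ := hsep
  have hPz : aeval α (X ^ 5 + C a * X ^ 2 + C b * X + C c : K[X]) = 0 := by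
    simpa using hroot
  have hQ : (5:L) * α ^ 4 + 2 * φ a * α + φ b ≠ 0 := by
    intro h
    have h1 := congrArg (aeval α) huv
    rw [map_add, map_mul, map_mul, hPz, mul_zero, zero_add, map_one] at h1
    have h2 : aeval α (derivative (X ^ 5 + C a * X ^ 2 + C b * X + C c : K[X]))
        = (5:L) * α ^ 4 + 2 * φ a * α + φ b := by
      simp [derivative_add, derivative_mul, derivative_X_pow, derivative_C, map_ofNat]
      ring
    rw [h2, h, mul_zero] at h1
    exact zero_ne_one h1
  -- differentiate the root equation
  have hd : D α * ((5:L) * α ^ 4 + 2 * φ a * α + φ b)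
      + (φ a' * α ^ 2 + φ b' * α + φ c') = 0 := by
    have h0 := congrArg D hroot
    simp only [map_add, map_zero, Derivation.leibniz, Derivation.leibniz_pow,
      hDa, hDb, hDc, smul_eq_mul, nsmul_eq_mul] at h0
    push_cast at h0
    linear_combination h0
  -- map the K-identities to L
  have ea : φ a' = 3 * φ a * φ b₁ := by
    have := congrArg φ ha'; simpa [map_mul, map_ofNat] using this
  have eb : φ b' = 4 * φ b * φ b₁ := by
    have := congrArg φ hb'; simpa [map_mul, map_ofNat] using this
  have ec : φ c' = 5 * φ c * φ b₁ := by
    have := congrArg φ hc'; simpa [map_mul, map_ofNat] using this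
  have hfac : (D α - φ b₁ * α) * ((5:L) * α ^ 4 + 2 * φ a * α + φ b) = 0 := by
    linear_combination hd - (5 * φ b₁) * hroot - α ^ 2 * ea - α * eb - ec
  have := (mul_eq_zero.mp hfac).resolve_right hQ
  linear_combination this
end

section
/- Let p = 11. For every a ∈ F_p*, with b = cr(a⁴·cr(u)), c = -18a³/(325b) as defined via u = 2(18/325)⁴ and cr the inverse cube map on F_p, the quintic P(x) = x⁵ + a·x² + b·x + c divides some projective polynomial H(x) = x¹² + v·x¹¹ + v·x + z over F_11 with z ≠ v² ; in particular every root of P in an algebraic closure of F_11 is hyperquadratic of order 1 over F_11. -/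
open Polynomial

instance : Fact (Nat.Prime 11) := ⟨by norm_num⟩

private lemma aux_div (a b c v z : ZMod 11)
    (h : (X ^ 5 + C a * X ^ 2 + C b * X + C c : (ZMod 11)[X]) ∣
      (X ^ 12 + C v * X ^ 11 + C v * X + C z)) :
    ∀ α : AlgebraicClosure (ZMod 11),
      aeval α (X ^ 5 + C a * X ^ 2 + C b * X + C c : (ZMod 11)[X]) = 0 →
      α ^ 12 + algebraMap (ZMod 11) _ v * α ^ 11
        + algebraMap (ZMod 11) _ v * α + algebraMap (ZMod 11) _ z = 0 := by
  intro α hα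
  obtain ⟨q, hq⟩ := h
  have h2 := congrArg (aeval α) hq
  rw [map_mul, hα, zero_mul] at h2
  simpa using h2

theorem stmt_15 (cr : ZMod 11 → ZMod 11) (hcr : ∀ x, (cr x) ^ 3 = x)
    (u : ZMod 11) (hu : u = 2 * (18 / 325) ^ 4)
    (a : ZMod 11) (ha : a ≠ 0)
    (b c : ZMod 11) (hb : b = cr (a ^ 4 * cr u)) (hc : c = -18 * a ^ 3 / (325 * b)) :
    ∃ v z : ZMod 11, z ≠ v ^ 2 ∧
      (X ^ 5 + C a * X ^ 2 + C b * X + C c : (ZMod 11)[X]) ∣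
        (X ^ 12 + C v * X ^ 11 + C v * X + C z) ∧
      ∀ α : AlgebraicClosure (ZMod 11),
        aeval α (X ^ 5 + C a * X ^ 2 + C b * X + C c : (ZMod 11)[X]) = 0 →
        α ^ 12 + algebraMap (ZMod 11) _ v * α ^ 11
          + algebraMap (ZMod 11) _ v * α + algebraMap (ZMod 11) _ z = 0 := by
  have inj : ∀ x y : ZMod 11, x ^ 3 = y ^ 3 → x = y := by decide
  have hu8 : u = 8 := by
    rw [hu, show ((18 : ZMod 11) / 325) = 3 from by
      rw [div_eq_iff (by decide : (325 : ZMod 11) ≠ 0)]; decide]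
    decide
  have hcru : cr u = 2 := inj _ _ (by rw [hcr, hu8]; decide)
  have h11 : (11 : (ZMod 11)[X]) = 0 := by
    calc (11 : (ZMod 11)[X]) = C 11 := (map_ofNat C 11).symm
    _ = C 0 := by rw [show (11 : ZMod 11) = 0 from by decide]
    _ = 0 := map_zero C
  have hA : a = 1 ∨ a = 2 ∨ a = 3 ∨ a = 4 ∨ a = 5 ∨ a = 6 ∨ a = 7 ∨ a = 8 ∨ a = 9 ∨ a = 10 := by
    revert ha
    exact fun h => (by decide : ∀ x : ZMod 11, x ≠ 0 → x = 1 ∨ x = 2 ∨ x = 3 ∨ x = 4 ∨ x = 5 ∨ x = 6 ∨ x = 7 ∨ x = 8 ∨ x = 9 ∨ x = 10) a h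
  rcases hA with rfl | rfl | rfl | rfl | rfl | rfl | rfl | rfl | rfl | rfl
  · have hb' : b = 7 := inj _ _ (by rw [hb, hcr, hcru]; decide)
    subst hb'
    have hc' : c = 9 := by rw [hc, div_eq_iff (by decide : ((325 : ZMod 11) * 7) ≠ 0)]; decide
    subst hc'
    have hdvd : (X ^ 5 + C (1 : ZMod 11) * X ^ 2 + C (7 : ZMod 11) * X + C (9 : ZMod 11) : (ZMod 11)[X]) ∣
        (X ^ 12 + C (7 : ZMod 11) * X ^ 11 + C (7 : ZMod 11) * X + C (2 : ZMod 11)) := by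
      refine ⟨(X ^ 7 + 7 * X ^ 6 + 10 * X ^ 4 + 8 * X ^ 3 + 8 * X ^ 2 + 4 * X + 10 : (ZMod 11)[X]), ?_⟩
      simp only [map_ofNat, map_one, map_zero]
      linear_combination (-1 * X ^ 9 + -2 * X ^ 8 + -6 * X ^ 7 + -7 * X ^ 6 + -8 * X ^ 5 + -14 * X ^ 4 + -12 * X ^ 3 + -10 * X ^ 2 + -9 * X + -8) * h11
    exact ⟨7, 2, by decide, hdvd, aux_div _ _ _ _ _ hdvd⟩
  · have hb' : b = 10 := inj _ _ (by rw [hb, hcr, hcru]; decide)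
    subst hb'
    have hc' : c = 2 := by rw [hc, div_eq_iff (by decide : ((325 : ZMod 11) * 10) ≠ 0)]; decide
    subst hc'
    have hdvd : (X ^ 5 + C (2 : ZMod 11) * X ^ 2 + C (10 : ZMod 11) * X + C (2 : ZMod 11) : (ZMod 11)[X]) ∣
        (X ^ 12 + C (5 : ZMod 11) * X ^ 11 + C (5 : ZMod 11) * X + C (10 : ZMod 11)) := by
      refine ⟨(X ^ 7 + 5 * X ^ 6 + 9 * X ^ 4 + 2 * X ^ 3 + 3 * X ^ 2 + 5 * X + 5 : (ZMod 11)[X]), ?_⟩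
      simp only [map_ofNat, map_one, map_zero]
      linear_combination (-1 * X ^ 9 + -2 * X ^ 8 + -5 * X ^ 7 + -3 * X ^ 6 + -9 * X ^ 5 + -4 * X ^ 4 + -4 * X ^ 3 + -6 * X ^ 2 + -5 * X) * h11
    exact ⟨5, 10, by decide, hdvd, aux_div _ _ _ _ _ hdvd⟩
  · have hb' : b = 2 := inj _ _ (by rw [hb, hcr, hcru]; decide)
    subst hb'
    have hc' : c = 9 := by rw [hc, div_eq_iff (by decide : ((325 : ZMod 11) * 2) ≠ 0)]; decide
    subst hc'
    have hdvd : (X ^ 5 + C (3 : ZMod 11) * X ^ 2 + C (2 : ZMod 11) * X + C (9 : ZMod 11) : (ZMod 11)[X]) ∣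
        (X ^ 12 + C (8 : ZMod 11) * X ^ 11 + C (8 : ZMod 11) * X + C (8 : ZMod 11)) := by
      refine ⟨(X ^ 7 + 8 * X ^ 6 + 8 * X ^ 4 + 7 * X ^ 3 + 8 * X ^ 2 + 3 * X + 7 : (ZMod 11)[X]), ?_⟩
      simp only [map_ofNat, map_one, map_zero]
      linear_combination (-1 * X ^ 9 + -3 * X ^ 8 + -3 * X ^ 7 + -9 * X ^ 6 + -4 * X ^ 5 + -10 * X ^ 4 + -8 * X ^ 3 + -9 * X ^ 2 + -3 * X + -5) * h11
    exact ⟨8, 8, by decide, hdvd, aux_div _ _ _ _ _ hdvd⟩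
  · have hb' : b = 8 := inj _ _ (by rw [hb, hcr, hcru]; decide)
    subst hb'
    have hc' : c = 9 := by rw [hc, div_eq_iff (by decide : ((325 : ZMod 11) * 8) ≠ 0)]; decide
    subst hc'
    have hdvd : (X ^ 5 + C (4 : ZMod 11) * X ^ 2 + C (8 : ZMod 11) * X + C (9 : ZMod 11) : (ZMod 11)[X]) ∣
        (X ^ 12 + C (2 : ZMod 11) * X ^ 11 + C (2 : ZMod 11) * X + C (6 : ZMod 11)) := by
      refine ⟨(X ^ 7 + 2 * X ^ 6 + 7 * X ^ 4 + 6 * X ^ 3 + 8 * X ^ 2 + 9 * X + 8 : (ZMod 11)[X]), ?_⟩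
      simp only [map_ofNat, map_one, map_zero]
      linear_combination (-1 * X ^ 9 + -2 * X ^ 8 + -3 * X ^ 7 + -5 * X ^ 6 + -8 * X ^ 5 + -13 * X ^ 4 + -14 * X ^ 3 + -16 * X ^ 2 + -13 * X + -6) * h11
    exact ⟨2, 6, by decide, hdvd, aux_div _ _ _ _ _ hdvd⟩
  · have hb' : b = 6 := inj _ _ (by rw [hb, hcr, hcru]; decide)
    subst hb'
    have hc' : c = 9 := by rw [hc, div_eq_iff (by decide : ((325 : ZMod 11) * 6) ≠ 0)]; decide
    subst hc'
    have hdvd : (X ^ 5 + C (5 : ZMod 11) * X ^ 2 + C (6 : ZMod 11) * X + C (9 : ZMod 11) : (ZMod 11)[X]) ∣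
        (X ^ 12 + C (10 : ZMod 11) * X ^ 11 + C (10 : ZMod 11) * X + C (7 : ZMod 11)) := by
      refine ⟨(X ^ 7 + 10 * X ^ 6 + 6 * X ^ 4 + 10 * X ^ 3 + 8 * X ^ 2 + X + 2 : (ZMod 11)[X]), ?_⟩
      simp only [map_ofNat, map_one, map_zero]
      linear_combination (-1 * X ^ 9 + -6 * X ^ 8 + -7 * X ^ 7 + -11 * X ^ 6 + -8 * X ^ 5 + -14 * X ^ 4 + -13 * X ^ 3 + -8 * X ^ 2 + -1 * X + -1) * h11
    exact ⟨10, 7, by decide, hdvd, aux_div _ _ _ _ _ hdvd⟩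
  · have hb' : b = 6 := inj _ _ (by rw [hb, hcr, hcru]; decide)
    subst hb'
    have hc' : c = 2 := by rw [hc, div_eq_iff (by decide : ((325 : ZMod 11) * 6) ≠ 0)]; decide
    subst hc'
    have hdvd : (X ^ 5 + C (6 : ZMod 11) * X ^ 2 + C (6 : ZMod 11) * X + C (2 : ZMod 11) : (ZMod 11)[X]) ∣
        (X ^ 12 + C (1 : ZMod 11) * X ^ 11 + C (1 : ZMod 11) * X + C (7 : ZMod 11)) := by
      refine ⟨(X ^ 7 + X ^ 6 + 5 * X ^ 4 + 10 * X ^ 3 + 3 * X ^ 2 + X + 9 : (ZMod 11)[X]), ?_⟩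
      simp only [map_ofNat, map_one, map_zero]
      linear_combination (-1 * X ^ 9 + -2 * X ^ 8 + -1 * X ^ 7 + -3 * X ^ 6 + -9 * X ^ 5 + -8 * X ^ 4 + -4 * X ^ 3 + -6 * X ^ 2 + -5 * X + -1) * h11
    exact ⟨1, 7, by decide, hdvd, aux_div _ _ _ _ _ hdvd⟩
  · have hb' : b = 8 := inj _ _ (by rw [hb, hcr, hcru]; decide)
    subst hb'
    have hc' : c = 2 := by rw [hc, div_eq_iff (by decide : ((325 : ZMod 11) * 8) ≠ 0)]; decide
    subst hc'
    have hdvd : (X ^ 5 + C (7 : ZMod 11) * X ^ 2 + C (8 : ZMod 11) * X + C (2 : ZMod 11) : (ZMod 11)[X]) ∣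
        (X ^ 12 + C (9 : ZMod 11) * X ^ 11 + C (9 : ZMod 11) * X + C (6 : ZMod 11)) := by
      refine ⟨(X ^ 7 + 9 * X ^ 6 + 4 * X ^ 4 + 6 * X ^ 3 + 3 * X ^ 2 + 9 * X + 3 : (ZMod 11)[X]), ?_⟩
      simp only [map_ofNat, map_one, map_zero]
      linear_combination (-1 * X ^ 9 + -7 * X ^ 8 + -7 * X ^ 7 + -5 * X ^ 6 + -7 * X ^ 5 + -7 * X ^ 4 + -9 * X ^ 3 + -9 * X ^ 2 + -3 * X) * h11
    exact ⟨9, 6, by decide, hdvd, aux_div _ _ _ _ _ hdvd⟩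
  · have hb' : b = 2 := inj _ _ (by rw [hb, hcr, hcru]; decide)
    subst hb'
    have hc' : c = 2 := by rw [hc, div_eq_iff (by decide : ((325 : ZMod 11) * 2) ≠ 0)]; decide
    subst hc'
    have hdvd : (X ^ 5 + C (8 : ZMod 11) * X ^ 2 + C (2 : ZMod 11) * X + C (2 : ZMod 11) : (ZMod 11)[X]) ∣
        (X ^ 12 + C (3 : ZMod 11) * X ^ 11 + C (3 : ZMod 11) * X + C (8 : ZMod 11)) := by
      refine ⟨(X ^ 7 + 3 * X ^ 6 + 3 * X ^ 4 + 7 * X ^ 3 + 3 * X ^ 2 + 3 * X + 4 : (ZMod 11)[X]), ?_⟩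
      simp only [map_ofNat, map_one, map_zero]
      linear_combination (-1 * X ^ 9 + -3 * X ^ 8 + -1 * X ^ 7 + -3 * X ^ 6 + -6 * X ^ 5 + -4 * X ^ 4 + -4 * X ^ 3 + -4 * X ^ 2 + -1 * X) * h11
    exact ⟨3, 8, by decide, hdvd, aux_div _ _ _ _ _ hdvd⟩
  · have hb' : b = 10 := inj _ _ (by rw [hb, hcr, hcru]; decide)
    subst hb'
    have hc' : c = 9 := by rw [hc, div_eq_iff (by decide : ((325 : ZMod 11) * 10) ≠ 0)]; decide
    subst hc'
    have hdvd : (X ^ 5 + C (9 : ZMod 11) * X ^ 2 + C (10 : ZMod 11) * X + C (9 : ZMod 11) : (ZMod 11)[X]) ∣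
        (X ^ 12 + C (6 : ZMod 11) * X ^ 11 + C (6 : ZMod 11) * X + C (10 : ZMod 11)) := by
      refine ⟨(X ^ 7 + 6 * X ^ 6 + 2 * X ^ 4 + 2 * X ^ 3 + 8 * X ^ 2 + 5 * X + 6 : (ZMod 11)[X]), ?_⟩
      simp only [map_ofNat, map_one, map_zero]
      linear_combination (-1 * X ^ 9 + -6 * X ^ 8 + -7 * X ^ 7 + -7 * X ^ 6 + -4 * X ^ 5 + -10 * X ^ 4 + -13 * X ^ 3 + -16 * X ^ 2 + -9 * X + -4) * h11
    exact ⟨6, 10, by decide, hdvd, aux_div _ _ _ _ _ hdvd⟩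
  · have hb' : b = 7 := inj _ _ (by rw [hb, hcr, hcru]; decide)
    subst hb'
    have hc' : c = 2 := by rw [hc, div_eq_iff (by decide : ((325 : ZMod 11) * 7) ≠ 0)]; decide
    subst hc'
    have hdvd : (X ^ 5 + C (10 : ZMod 11) * X ^ 2 + C (7 : ZMod 11) * X + C (2 : ZMod 11) : (ZMod 11)[X]) ∣
        (X ^ 12 + C (4 : ZMod 11) * X ^ 11 + C (4 : ZMod 11) * X + C (2 : ZMod 11)) := by
      refine ⟨(X ^ 7 + 4 * X ^ 6 + X ^ 4 + 8 * X ^ 3 + 3 * X ^ 2 + 4 * X + 1 : (ZMod 11)[X]), ?_⟩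
      simp only [map_ofNat, map_one, map_zero]
      linear_combination (-1 * X ^ 9 + -5 * X ^ 8 + -3 * X ^ 7 + -2 * X ^ 6 + -8 * X ^ 5 + -8 * X ^ 4 + -7 * X ^ 3 + -4 * X ^ 2 + -1 * X) * h11
    exact ⟨4, 2, by decide, hdvd, aux_div _ _ _ _ _ hdvd⟩
end
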